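/- Let Γ be a finite alphabet and let w ∈ Γ* be a word. The upward closure of w under the subword order, i.e., the language {u ∈ Γ* : w ⊑ u} of all words containing w as a scattered subword, is a weakly acyclic language. -/

import Mathlib

/-- A DFA is *weakly acyclic* if whenever a nonempty word `w` loops on a state `q`,
every letter occurring in `w` self-loops on `q`. -/
def DFA.WeaklyAcyclic {α : Type*} {σ : Type*} (A : DFA α σ) : Prop :=
  ∀ (q : σ) (w : List α), w ≠ [] → A.evalFrom q w = q → ∀ a ∈ w, A.step q a = q

/-- A language is weakly acyclic if it is accepted by some weakly acyclic DFA
with finitely many states. -/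
def Language.IsWeaklyAcyclic {α : Type*} (L : Language α) : Prop :=
  ∃ (σ : Type) (_ : Fintype σ) (A : DFA α σ), A.WeaklyAcyclic ∧ A.accepts = L

/-- The residual of the language `L` with respect to the word `u`. -/
def Language.residual {α : Type*} (L : Language α) (u : List α) : Language α :=
  {v | u ++ v ∈ L}

/-- The DFA matching `w` as a scattered subword. -/
def subwordDFA {α : Type} (w : List α) [DecidableEq α] : DFA α (Fin (w.length + 1)) where
  step q a :=
    if h : q.val < w.length then
      (if w.get ⟨q.val, h⟩ = a then ⟨q.val + 1, by omega⟩ else q)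
    else q
  start := ⟨0, by omega⟩
  accept := {q | q.val = w.length}

lemma subwordDFA_step_le {α : Type} (w : List α) [DecidableEq α]
    (q : Fin (w.length + 1)) (a : α) : q.val ≤ ((subwordDFA w).step q a).val := by
  simp only [subwordDFA]
  split
  · split <;> simp <;> omega
  · simp

lemma subwordDFA_eval_le {α : Type} (w : List α) [DecidableEq α]
    (q : Fin (w.length + 1)) (u : List α) : q.val ≤ ((subwordDFA w).evalFrom q u).val := by
  induction u generalizing q with
  | nil => simp [DFA.evalFrom]
  | cons a u ih =>
      calc q.val ≤ ((subwordDFA w).step q a).val := subwordDFA_step_le w q a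
        _ ≤ _ := ih _

lemma subwordDFA_eval_iff {α : Type} (w : List α) [DecidableEq α]
    (u : List α) (q : Fin (w.length + 1)) :
    ((subwordDFA w).evalFrom q u).val = w.length ↔ (w.drop q.val).Sublist u := by
  induction u generalizing q with
  | nil =>
      simp only [DFA.evalFrom, List.foldl_nil, List.sublist_nil, List.drop_eq_nil_iff]
      constructor
      · intro h; omega
      · intro h; have := q.isLt; omega
  | cons a u ih =>
      have hstep : (subwordDFA w).evalFrom q (a :: u) =
          (subwordDFA w).evalFrom ((subwordDFA w).step q a) u := rfl
      rw [hstep, ih]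
      by_cases h : q.val < w.length
      · have hdrop : w.drop q.val = w.get ⟨q.val, h⟩ :: w.drop (q.val + 1) :=
          List.drop_eq_getElem_cons h
        by_cases ha : w.get ⟨q.val, h⟩ = a
        · have hst : (subwordDFA w).step q a = ⟨q.val + 1, by omega⟩ := by
            show dite _ _ _ = _
            rw [dif_pos h, if_pos ha]
          rw [hst]
          show (w.drop (q.val + 1)).Sublist u ↔ _
          rw [hdrop, ha]
          exact List.cons_sublist_cons.symm
        · have hst : (subwordDFA w).step q a = q := by
            show dite _ _ _ = _
            rw [dif_pos h, if_neg ha]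
          rw [hst]
          constructor
          · intro hs; rw [hdrop]; exact (hdrop ▸ hs).cons a
          · intro hs
            rw [hdrop] at hs ⊢
            cases hs with
            | cons _ hs' => exact hs'
            | cons_cons _ hs' => exact absurd rfl ha
      · have hst : (subwordDFA w).step q a = q := by
          show dite _ _ _ = _
          rw [dif_neg h]
        rw [hst]
        have hd : w.drop q.val = [] := List.drop_eq_nil_iff.mpr (by omega)
        simp [hd]

lemma subwordDFA_weaklyAcyclic {α : Type} (w : List α) [DecidableEq α] :
    (subwordDFA w).WeaklyAcyclic := by
  intro q v hne hloop
  induction v generalizing q with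
  | nil => exact absurd rfl hne
  | cons a v ih =>
      have hstep : (subwordDFA w).evalFrom q (a :: v) =
          (subwordDFA w).evalFrom ((subwordDFA w).step q a) v := rfl
      rw [hstep] at hloop
      have h1 : q.val ≤ ((subwordDFA w).step q a).val := subwordDFA_step_le w q a
      have h2 : ((subwordDFA w).step q a).val ≤
          ((subwordDFA w).evalFrom ((subwordDFA w).step q a) v).val :=
        subwordDFA_eval_le w _ v
      have hq : (subwordDFA w).step q a = q := by
        apply Fin.ext; rw [hloop] at h2; omega
      intro b hb
      rcases List.mem_cons.mp hb with rfl | hb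
      · exact hq
      · rcases List.eq_nil_or_concat v with rfl | _
        · exact absurd hb List.not_mem_nil
        · rw [hq] at hloop
          exact ih q (by rintro rfl; simp at hb) hloop b hb

/-- The upward closure of a word under the (scattered) subword order is a weakly
acyclic language. -/
theorem upwardClosure_weaklyAcyclic {α : Type} [Fintype α] (w : List α) :
    Language.IsWeaklyAcyclic {u : List α | w.Sublist u} := by
  classical
  refine ⟨Fin (w.length + 1), inferInstance, subwordDFA w, subwordDFA_weaklyAcyclic w, ?_⟩
  ext u
  show (subwordDFA w).evalFrom (subwordDFA w).start u ∈ (subwordDFA w).accept ↔ w.Sublist u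
  have key := subwordDFA_eval_iff w u (subwordDFA w).start
  simpa [subwordDFA] using key
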